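/- Fix a positive integer T, vectors g, m, w, d_1 ∈ ℝ^T with ‖m ⊙ w‖₂ ≠ 0, and ε > 0. Let c = ⟨w, m ⊙ d_1⟩ − ⟨g, d_1⟩. If d_2 = α · (m ⊙ w) for some α ≥ 0 and ‖d_2‖₂ > (√ε − c) / ‖m ⊙ w‖₂, then the squared prediction error satisfies (⟨w, m ⊙ (d_1 + d_2)⟩ − ⟨g, d_1⟩)² > ε. -/

import Mathlib

open scoped RealInnerProductSpace

/-- Entrywise (Hadamard) product of two vectors in Euclidean space. -/
noncomputable def had {T : ℕ} (a b : EuclideanSpace ℝ (Fin T)) : EuclideanSpace ℝ (Fin T) :=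
  WithLp.toLp 2 (fun i => a i * b i)

/-- If `‖m ⊙ w‖ ≠ 0`, `c = ⟪w, m ⊙ d₁⟫ - ⟪g, d₁⟫`, and the variant vector
`d₂ = α • (m ⊙ w)` (with `α ≥ 0`) satisfies `‖d₂‖ > (√ε - c) / ‖m ⊙ w‖`, then
the squared prediction error exceeds `ε`. -/
theorem stmt3 (T : ℕ) (hT : 0 < T) (g m w d₁ : EuclideanSpace ℝ (Fin T))
    (hnz : ‖had m w‖ ≠ 0) (ε : ℝ) (hε : 0 < ε)
    (c : ℝ) (hc : c = ⟪w, had m d₁⟫ - ⟪g, d₁⟫)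
    (α : ℝ) (hα : 0 ≤ α) (d₂ : EuclideanSpace ℝ (Fin T)) (hd₂ : d₂ = α • had m w)
    (hbig : ‖d₂‖ > (Real.sqrt ε - c) / ‖had m w‖) :
    (⟪w, had m (d₁ + d₂)⟫ - ⟪g, d₁⟫) ^ 2 > ε := by
  have hpos : 0 < ‖had m w‖ := lt_of_le_of_ne (norm_nonneg _) (Ne.symm hnz)
  have hkey : ⟪w, had m (d₁ + d₂)⟫ = ⟪w, had m d₁⟫ + ‖d₂‖ * ‖had m w‖ := by
    have h1 : ⟪w, had m (d₁ + d₂)⟫ = ⟪w, had m d₁⟫ + α * (‖had m w‖ ^ 2) := by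
      subst hd₂
      simp only [PiLp.inner_apply, RCLike.inner_apply, conj_trivial,
        EuclideanSpace.norm_eq]
      rw [Real.sq_sqrt (by positivity), Finset.mul_sum, ← Finset.sum_add_distrib]
      apply Finset.sum_congr rfl
      intro i _
      show (m i * ((d₁ + (α • had m w)) i)) * w i = _
      have h : (d₁ + (α • had m w)) i = d₁ i + α * (m i * w i) := rfl
      rw [h]
      show _ = (m i * d₁ i) * w i + α * ‖m i * w i‖ ^ 2
      rw [Real.norm_eq_abs, sq_abs]
      ring
    have h2 : ‖d₂‖ = α * ‖had m w‖ := by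
      rw [hd₂, norm_smul, Real.norm_eq_abs, abs_of_nonneg hα]
    rw [h1, h2]; ring
  have hd2 : ‖d₂‖ * ‖had m w‖ > Real.sqrt ε - c := by
    have := (div_lt_iff₀ hpos).mp hbig
    linarith
  have hsqrt : 0 < Real.sqrt ε := Real.sqrt_pos.mpr hε
  have herr : ⟪w, had m (d₁ + d₂)⟫ - ⟪g, d₁⟫ > Real.sqrt ε := by
    rw [hkey]; linarith [hc]
  calc ε = Real.sqrt ε ^ 2 := (Real.sq_sqrt hε.le).symm
    _ < (⟪w, had m (d₁ + d₂)⟫ - ⟪g, d₁⟫) ^ 2 := by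
        apply pow_lt_pow_left₀ herr hsqrt.le (by norm_num)
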